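/- Let D ⊂ ℝ^{n-1} be a set satisfying the (n-1)-dimensional volume density condition. Define Ω = B(0,1) \ {(x',0) : x' ∈ ℝ^{n-1} \ D} ⊂ ℝⁿ. Then for every ξ ∈ ∂Ω and R > 0, the (n-1)-dimensional Hausdorff content of closure(B(ξ,R)) \ Ω satisfies H^{n-1}_∞(closure(B(ξ,R)) \ Ω) ≥ R^{n-1}/C for a constant C depending only on n and the density constant of D. -/

import Mathlib

open MeasureTheory Metric Set
open scoped ENNReal

/-- The `s`-dimensional Hausdorff content of a set in a metric space. -/
noncomputable def hausdorffContent {X : Type*} [MetricSpace X] (s : ℝ) (E : Set X) :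
    ℝ≥0∞ :=
  sInf { m : ℝ≥0∞ | ∃ (c : ℕ → X) (r : ℕ → ℝ), (∀ i, 0 < r i) ∧
    E ⊆ ⋃ i, Metric.ball (c i) (r i) ∧ m = ∑' i, ENNReal.ofReal (r i ^ s) }

/-- The natural isometric embedding `ℝ^(n-1) → ℝⁿ` as the hyperplane `{xₙ = 0}`. -/
noncomputable def emb (n : ℕ) (x : EuclideanSpace ℝ (Fin (n - 1))) :
    EuclideanSpace ℝ (Fin n) :=
  WithLp.toLp 2 (fun i : Fin n => if h : (i : ℕ) < n - 1 then x ⟨i, h⟩ else 0)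

noncomputable def proj (m : ℕ) (x : EuclideanSpace ℝ (Fin (m + 1))) :
    EuclideanSpace ℝ (Fin m) :=
  WithLp.toLp 2 (fun i : Fin m => x i.castSucc)

lemma dist_proj_le (m : ℕ) (a b : EuclideanSpace ℝ (Fin (m + 1))) :
    dist (proj m a) (proj m b) ≤ dist a b := by
  rw [EuclideanSpace.dist_eq, EuclideanSpace.dist_eq]
  apply Real.sqrt_le_sqrt
  rw [Fin.sum_univ_castSucc]
  exact le_add_of_nonneg_right (by positivity)

lemma dist_eq_of_last (m : ℕ) (a b : EuclideanSpace ℝ (Fin (m + 1)))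
    (h : a (Fin.last m) = b (Fin.last m)) :
    dist a b = dist (proj m a) (proj m b) := by
  rw [EuclideanSpace.dist_eq, EuclideanSpace.dist_eq, Fin.sum_univ_castSucc, h, dist_self]
  norm_num
  rfl

lemma emb_castSucc (m : ℕ) (x : EuclideanSpace ℝ (Fin (m + 1 - 1))) (j : Fin m) :
    emb (m + 1) x j.castSucc = x j := by
  simp [emb]

lemma emb_last (m : ℕ) (x : EuclideanSpace ℝ (Fin (m + 1 - 1))) :
    emb (m + 1) x (Fin.last m) = 0 := by
  simp [emb]

lemma proj_emb (m : ℕ) (x : EuclideanSpace ℝ (Fin (m + 1 - 1))) :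
    proj m (emb (m + 1) x) = x := by
  ext j
  exact emb_castSucc m x j

lemma le_content (m : ℕ) (E : Set (EuclideanSpace ℝ (Fin (m + 1)))) :
    volume (proj m '' E) ≤
      hausdorffContent (m : ℝ) E * volume (ball (0 : EuclideanSpace ℝ (Fin m)) 1) := by
  set V := volume (ball (0 : EuclideanSpace ℝ (Fin m)) 1) with hV
  have hV0 : V ≠ 0 := (measure_ball_pos _ _ one_pos).ne'
  have hVt : V ≠ ⊤ := measure_ball_lt_top.ne
  rw [← ENNReal.div_le_iff hV0 hVt]
  apply le_sInf
  rintro x ⟨c, r, hr, hcov, rfl⟩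
  rw [ENNReal.div_le_iff hV0 hVt]
  calc volume (proj m '' E)
      ≤ volume (⋃ i, ball (proj m (c i)) (r i)) := by
        apply measure_mono
        rintro _ ⟨z, hzE, rfl⟩
        obtain ⟨i, hi⟩ := mem_iUnion.1 (hcov hzE)
        exact mem_iUnion.2 ⟨i, mem_ball.2 (lt_of_le_of_lt (dist_proj_le m z (c i)) (mem_ball.1 hi))⟩
    _ ≤ ∑' i, volume (ball (proj m (c i)) (r i)) := measure_iUnion_le _
    _ = ∑' i, ENNReal.ofReal (r i ^ (m : ℝ)) * V := by
        refine tsum_congr fun i => ?_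
        rw [Measure.addHaar_ball_of_pos _ _ (hr i), finrank_euclideanSpace_fin,
          Real.rpow_natCast]
    _ = (∑' i, ENNReal.ofReal (r i ^ (m : ℝ))) * V := ENNReal.tsum_mul_right

lemma preconn_frontier {X : Type*} [TopologicalSpace X] {s t : Set X}
    (hs : IsPreconnected s) (h1 : (s ∩ t).Nonempty) (h2 : (s \ t).Nonempty) :
    (s ∩ frontier t).Nonempty := by
  by_contra h
  rw [not_nonempty_iff_eq_empty] at h
  have hmem : ∀ x ∈ s, x ∉ frontier t := fun x hx hfx =>
    (eq_empty_iff_forall_notMem.1 h x) ⟨hx, hfx⟩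
  have hsub : s ⊆ interior t ∪ (closure t)ᶜ := by
    intro x hx
    rcases em (x ∈ closure t) with hc | hc
    · exact Or.inl (by
        rcases em (x ∈ interior t) with hi | hi
        · exact hi
        · exact absurd ⟨hc, hi⟩ (hmem x hx))
    · exact Or.inr hc
  obtain ⟨a, ha, hat⟩ := h1
  obtain ⟨b, hb, hbt⟩ := h2
  have ha' : a ∈ interior t := by
    rcases hsub ha with h' | h'
    · exact h'
    · exact absurd (subset_closure hat) h'
  have hb' : b ∈ (closure t)ᶜ := by
    rcases hsub hb with h' | h'
    · exact absurd (interior_subset h') hbt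
    · exact h'
  obtain ⟨z, hz⟩ := hs (interior t) (closure t)ᶜ isOpen_interior
    isClosed_closure.isOpen_compl hsub ⟨a, ha, ha'⟩ ⟨b, hb, hb'⟩
  exact hz.2.2 (subset_closure (interior_subset hz.2.1))

/-- if `D ⊆ ℝ^(n-1)` satisfies the `(n-1)`-dimensional volume density
condition, then `Ω = B(0,1) \ {(x',0) : x' ∉ D}` satisfies the Hausdorff content
density bound `H^{n-1}_∞(closedBall(ξ,R) \ Ω) ≥ R^(n-1)/C` at every `ξ ∈ ∂Ω`. -/
theorem stmt14 (n : ℕ) (hn : 2 ≤ n) (D : Set (EuclideanSpace ℝ (Fin (n - 1))))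
    (C' : ℝ) (hC' : 0 < C')
    (hVDC : ∀ η ∈ frontier D, ∀ R : ℝ, 0 < R →
      ENNReal.ofReal (R ^ (n - 1) / C') ≤ volume (closedBall η R \ D)) :
    ∃ C : ℝ, 0 < C ∧
      ∀ ξ ∈ frontier (ball (0 : EuclideanSpace ℝ (Fin n)) 1 \ emb n '' Dᶜ),
      ∀ R : ℝ, 0 < R →
        ENNReal.ofReal (R ^ (n - 1) / C) ≤
          hausdorffContent ((n : ℝ) - 1)
            (closedBall ξ R \ (ball (0 : EuclideanSpace ℝ (Fin n)) 1 \ emb n '' Dᶜ)) := by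
  obtain ⟨m, rfl⟩ : ∃ m, n = m + 1 := ⟨n - 1, by omega⟩
  set V := volume (ball (0 : EuclideanSpace ℝ (Fin m)) 1) with hVdef
  have hV0 : V ≠ 0 := (measure_ball_pos _ _ one_pos).ne'
  have hVt : V ≠ ⊤ := measure_ball_lt_top.ne
  set v := V.toReal with hvdef
  have hv : 0 < v := ENNReal.toReal_pos hV0 hVt
  have hVv : V = ENNReal.ofReal v := (ENNReal.ofReal_toReal hVt).symm
  refine ⟨8 ^ m * (C' + 1) * (v + 1), by positivity, ?_⟩
  intro ξ hξ R hR
  set C : ℝ := 8 ^ m * (C' + 1) * (v + 1) with hCdef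
  have hC : 0 < C := by positivity
  have h8 : (0:ℝ) < 8 ^ m := by positivity
  have h2 : (0:ℝ) < 2 ^ m := by positivity
  have hC8 : 8 ^ m ≤ C := by rw [hCdef]; nlinarith [mul_pos hC' hv]
  have hC2 : 2 ^ m ≤ C := le_trans (pow_le_pow_left₀ (by norm_num) (by norm_num) m) hC8
  have h2C : 2 ^ m * C' * v ≤ C := by
    have e1 : (2:ℝ) ^ m ≤ 8 ^ m := pow_le_pow_left₀ (by norm_num) (by norm_num) m
    calc 2 ^ m * C' * v = 2 ^ m * (C' * v) := by ring
      _ ≤ 8 ^ m * (C' * v) := mul_le_mul_of_nonneg_right e1 (by positivity)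
      _ ≤ 8 ^ m * ((C' + 1) * (v + 1)) := by
          apply mul_le_mul_of_nonneg_left _ h8.le
          nlinarith
      _ = C := by rw [hCdef]; ring
  simp only [Nat.add_sub_cancel] at hVDC ⊢
  rw [show ((m + 1 : ℕ) : ℝ) - 1 = (m : ℝ) by push_cast; ring]
  set Ω : Set (EuclideanSpace ℝ (Fin (m + 1))) := ball 0 1 \ emb (m + 1) '' Dᶜ with hΩ
  set E := closedBall ξ R \ Ω with hE
  suffices hmain : ENNReal.ofReal (R ^ m / C * v) ≤ volume (proj m '' E) by
    have h2' : ENNReal.ofReal (R ^ m / C) * V ≤ hausdorffContent (m : ℝ) E * V := by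
      calc ENNReal.ofReal (R ^ m / C) * V = ENNReal.ofReal (R ^ m / C * v) := by
            rw [hVv, ← ENNReal.ofReal_mul (by positivity)]
        _ ≤ volume (proj m '' E) := hmain
        _ ≤ _ := le_content m E
    exact (ENNReal.mul_le_mul_iff_left hV0 hVt).1 h2'
  have hξ1 : ‖ξ‖ ≤ 1 := by
    have hcl : closure Ω ⊆ closedBall 0 1 :=
      closure_minimal (Set.diff_subset.trans ball_subset_closedBall) isClosed_closedBall
    simpa [mem_closedBall_zero_iff] using hcl (frontier_subset_closure hξ)
  have hcases : ξ ∉ ball (0 : EuclideanSpace ℝ (Fin (m + 1))) 1 ∨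
      ξ ∈ closure (emb (m + 1) '' Dᶜ) := by
    have h1 : ξ ∈ closure Ωᶜ := frontier_subset_closure ((frontier_compl Ω).symm ▸ hξ)
    have h2'' : Ωᶜ = (ball (0 : EuclideanSpace ℝ (Fin (m + 1))) 1)ᶜ ∪ emb (m + 1) '' Dᶜ := by
      rw [hΩ, Set.diff_eq, Set.compl_inter, compl_compl]
    rw [h2'', closure_union, (isOpen_ball.isClosed_compl).closure_eq] at h1
    exact h1
  rcases hcases with hA | hB
  · -- sphere case
    have hξn : ‖ξ‖ = 1 := le_antisymm hξ1 (by simpa [mem_ball_zero_iff, not_lt] using hA)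
    set c : EuclideanSpace ℝ (Fin (m + 1)) := (1 + R / 4) • ξ with hc
    have hsub' : c - ξ = (R / 4) • ξ := by rw [hc]; module
    have hcx : dist c ξ = R / 4 := by
      rw [dist_eq_norm, hsub', norm_smul, hξn, Real.norm_eq_abs,
        abs_of_pos (by positivity : (0:ℝ) < R / 4), mul_one]
    have hcn : ‖c‖ = 1 + R / 4 := by
      rw [hc, norm_smul, hξn, mul_one, Real.norm_eq_abs, abs_of_pos (by positivity)]
    have hT : ball (proj m c) (R / 8) ⊆ proj m '' E := by
      intro y hy
      set z : EuclideanSpace ℝ (Fin (m + 1)) :=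
        WithLp.toLp 2 (fun i => Fin.lastCases (c (Fin.last m)) (fun j => y j) i) with hzdef
      have hzl : z (Fin.last m) = c (Fin.last m) := by
        rw [hzdef]; exact Fin.lastCases_last (n := m) (motive := fun _ => ℝ)
      have hproj : proj m z = y := by
        ext j; rw [hzdef]; simp only [proj]; exact Fin.lastCases_castSucc j
      have hdzc : dist z c = dist y (proj m c) := by
        rw [dist_eq_of_last m z c hzl, hproj]
      have hdzy : dist z c < R / 8 := by rw [hdzc]; exact mem_ball.1 hy
      refine ⟨z, ⟨?_, ?_⟩, hproj⟩
      · refine mem_closedBall.2 ?_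
        calc dist z ξ ≤ dist z c + dist c ξ := dist_triangle ..
          _ ≤ R / 8 + R / 4 := by linarith
          _ ≤ R := by linarith
      · rintro ⟨hz1, -⟩
        rw [mem_ball_zero_iff] at hz1
        have hns : ‖c‖ - ‖z‖ ≤ ‖c - z‖ := norm_sub_norm_le c z
        have hzc : ‖c - z‖ = dist z c := by rw [dist_comm z c, dist_eq_norm]
        linarith
    calc ENNReal.ofReal (R ^ m / C * v) ≤ ENNReal.ofReal ((R / 8) ^ m) * V := by
          rw [hVv, ← ENNReal.ofReal_mul (by positivity)]
          apply ENNReal.ofReal_le_ofReal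
          have h1 : R ^ m / C ≤ (R / 8) ^ m := by
            rw [div_pow]
            exact div_le_div_of_nonneg_left (by positivity) h8 hC8
          nlinarith
      _ = volume (ball (proj m c) (R / 8)) := by
          rw [Measure.addHaar_ball_of_pos _ _ (by positivity : (0:ℝ) < R / 8),
            finrank_euclideanSpace_fin]
      _ ≤ volume (proj m '' E) := measure_mono hT
  · -- slit case
    set x' := proj m ξ with hx'def
    have hξlast : ξ (Fin.last m) = 0 := by
      have hcl : IsClosed {x : EuclideanSpace ℝ (Fin (m + 1)) | x (Fin.last m) = 0} :=
        isClosed_eq (EuclideanSpace.proj (Fin.last m)).continuous continuous_const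
      exact closure_minimal (by rintro _ ⟨q, -, rfl⟩; exact emb_last m q) hcl hB
    have hx'cl : x' ∈ closure Dᶜ := by
      rw [Metric.mem_closure_iff]
      intro ε hε
      obtain ⟨p, hpS, hpd⟩ := Metric.mem_closure_iff.1 hB ε hε
      obtain ⟨q, hq, rfl⟩ := hpS
      refine ⟨q, hq, ?_⟩
      calc dist x' q = dist (proj m ξ) (proj m (emb (m + 1) q)) := by rw [proj_emb]
        _ ≤ dist ξ (emb (m + 1) q) := dist_proj_le ..
        _ < ε := hpd
    have hdist_emb : ∀ y : EuclideanSpace ℝ (Fin m), dist (emb (m + 1) y) ξ = dist y x' := by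
      intro y
      rw [dist_eq_of_last m _ _ (by rw [emb_last, hξlast]), proj_emb]
    have hT : closedBall x' R \ D ⊆ proj m '' E := by
      rintro y ⟨hy1, hy2⟩
      refine ⟨emb (m + 1) y, ⟨?_, ?_⟩, proj_emb m y⟩
      · exact mem_closedBall.2 (by rw [hdist_emb]; exact mem_closedBall.1 hy1)
      · rintro ⟨-, hcon⟩; exact hcon ⟨y, hy2, rfl⟩
    by_cases hfr : ∃ η ∈ frontier D, η ∈ closedBall x' (R / 2)
    · obtain ⟨η, hη1, hη2⟩ := hfr
      have hvd := hVDC η hη1 (R / 2) (by positivity)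
      have hsub : closedBall η (R / 2) \ D ⊆ closedBall x' R \ D := by
        rintro w ⟨hw1, hw2⟩
        refine ⟨mem_closedBall.2 ?_, hw2⟩
        calc dist w x' ≤ dist w η + dist η x' := dist_triangle ..
          _ ≤ R / 2 + R / 2 := add_le_add (mem_closedBall.1 hw1) (mem_closedBall.1 hη2)
          _ = R := by ring
      calc ENNReal.ofReal (R ^ m / C * v) ≤ ENNReal.ofReal ((R / 2) ^ m / C') := by
            apply ENNReal.ofReal_le_ofReal
            rw [div_pow, div_div, div_mul_eq_mul_div, div_le_div_iff₀ hC (by positivity)]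
            nlinarith [mul_le_mul_of_nonneg_left h2C (pow_nonneg hR.le m)]
        _ ≤ volume (closedBall η (R / 2) \ D) := hvd
        _ ≤ volume (closedBall x' R \ D) := measure_mono hsub
        _ ≤ volume (proj m '' E) := measure_mono hT
    · have hball : ball x' (R / 2) ⊆ Dᶜ := by
        intro w hw hwD
        have hne1 : (ball x' (R / 2) ∩ D).Nonempty := ⟨w, hw, hwD⟩
        have hne2 : (ball x' (R / 2) \ D).Nonempty := by
          obtain ⟨q, hq, hqd⟩ := Metric.mem_closure_iff.1 hx'cl (R / 2) (by positivity)
          exact ⟨q, mem_ball.2 (by rw [dist_comm]; exact hqd), hq⟩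
        obtain ⟨η, hη1, hη2⟩ :=
          preconn_frontier (convex_ball x' (R / 2)).isPreconnected hne1 hne2
        exact hfr ⟨η, hη2, ball_subset_closedBall hη1⟩
      have hsub : ball x' (R / 2) ⊆ closedBall x' R \ D := fun w hw =>
        ⟨mem_closedBall.2 (le_trans (mem_ball.1 hw).le (by linarith)), hball hw⟩
      calc ENNReal.ofReal (R ^ m / C * v) ≤ ENNReal.ofReal ((R / 2) ^ m) * V := by
            rw [hVv, ← ENNReal.ofReal_mul (by positivity)]
            apply ENNReal.ofReal_le_ofReal
            have h1 : R ^ m / C ≤ (R / 2) ^ m := by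
              rw [div_pow]
              exact div_le_div_of_nonneg_left (by positivity) h2 hC2
            nlinarith
        _ = volume (ball x' (R / 2)) := by
            rw [Measure.addHaar_ball_of_pos _ _ (by positivity : (0:ℝ) < R / 2),
              finrank_euclideanSpace_fin]
        _ ≤ volume (closedBall x' R \ D) := measure_mono hsub
        _ ≤ volume (proj m '' E) := measure_mono hT
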